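/- Let A• = (A_n, d_n, δ_n) be a complex in S. If the three-term diagram (d_{n−1}: A_{n−1}→A_n, d_n: A_n→A_{n+1}, δ_n: d_{n−1}∘d_n ⟹ 0) is 2-exact in A_n, then the complex A• is relatively 2-exact in A_n. -/

import Mathlib

/-!
Common framework: relatively exact 2-categories (after Nakaoka,
"Cohomology theory in 2-categories").
-/

open CategoryTheory Bicategory

universe w v u

/-- The tensor unit of a monoidal structure, given explicitly. -/
abbrev munit {H : Type v} [Category.{w} H] (m : MonoidalCategory H) : H :=
  @MonoidalCategoryStruct.tensorUnit H _ m.toMonoidalCategoryStruct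

/-- The tensor product of two objects, for an explicitly given monoidal structure. -/
abbrev mtens {H : Type v} [Category.{w} H] (m : MonoidalCategory H) (x y : H) : H :=
  @MonoidalCategoryStruct.tensorObj H _ m.toMonoidalCategoryStruct x y

section Defs

variable {B : Type u} [Bicategory.{w, v} B]

/-- A 1-cell `f` is faithful if postwhiskering `− ▷ f` is injective on 2-cells. -/
def CFaithful {A C : B} (f : A ⟶ C) : Prop :=
  ∀ ⦃X : B⦄ ⦃g h : X ⟶ A⦄ (η θ : g ⟶ h), η ▷ f = θ ▷ f → η = θ

/-- A 1-cell `f` is fully faithful if `− ∘ f` is a fully faithful functor on hom-categories. -/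
def CFullyFaithful {A C : B} (f : A ⟶ C) : Prop :=
  CFaithful f ∧ ∀ ⦃X : B⦄ (g h : X ⟶ A) (μ : g ≫ f ⟶ h ≫ f), ∃ η : g ⟶ h, η ▷ f = μ

/-- A 1-cell `f` is cofaithful if prewhiskering `f ◁ −` is injective on 2-cells. -/
def CCofaithful {A C : B} (f : A ⟶ C) : Prop :=
  ∀ ⦃X : B⦄ ⦃g h : C ⟶ X⦄ (η θ : g ⟶ h), f ◁ η = f ◁ θ → η = θ

/-- A 1-cell `f` is fully cofaithful if `f ∘ −` is a fully faithful functor on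
hom-categories. -/
def CFullyCofaithful {A C : B} (f : A ⟶ C) : Prop :=
  CCofaithful f ∧ ∀ ⦃X : B⦄ (g h : C ⟶ X) (μ : f ≫ g ⟶ f ≫ h), ∃ η : g ⟶ h, f ◁ η = μ

/-- A 1-cell is an equivalence if it has a quasi-inverse up to invertible 2-cells. -/
def Is2Equiv {A C : B} (f : A ⟶ C) : Prop :=
  ∃ g : C ⟶ A, Nonempty (f ≫ g ≅ 𝟙 A) ∧ Nonempty (g ≫ f ≅ 𝟙 C)

/-- 2-universal product of two 0-cells. -/
def IsProduct2 (A₁ A₂ P : B) (p₁ : P ⟶ A₁) (p₂ : P ⟶ A₂) : Prop :=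
  (∀ (X : B) (q₁ : X ⟶ A₁) (q₂ : X ⟶ A₂),
    ∃ (q : X ⟶ P) (_ : q ≫ p₁ ⟶ q₁) (_ : q ≫ p₂ ⟶ q₂), True)
  ∧ (∀ (X : B) (q₁ : X ⟶ A₁) (q₂ : X ⟶ A₂) (r r' : X ⟶ P)
      (ξ₁ : r ≫ p₁ ⟶ q₁) (ξ₂ : r ≫ p₂ ⟶ q₂) (ξ₁' : r' ≫ p₁ ⟶ q₁) (ξ₂' : r' ≫ p₂ ⟶ q₂),
      ∃! η : r ⟶ r', ((η ▷ p₁) ≫ ξ₁' = ξ₁) ∧ ((η ▷ p₂) ≫ ξ₂' = ξ₂))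

/-- 2-universal coproduct of two 0-cells. -/
def IsCoproduct2 (A₁ A₂ P : B) (i₁ : A₁ ⟶ P) (i₂ : A₂ ⟶ P) : Prop :=
  (∀ (X : B) (q₁ : A₁ ⟶ X) (q₂ : A₂ ⟶ X),
    ∃ (q : P ⟶ X) (_ : i₁ ≫ q ⟶ q₁) (_ : i₂ ≫ q ⟶ q₂), True)
  ∧ (∀ (X : B) (q₁ : A₁ ⟶ X) (q₂ : A₂ ⟶ X) (r r' : P ⟶ X)
      (ξ₁ : i₁ ≫ r ⟶ q₁) (ξ₂ : i₂ ≫ r ⟶ q₂) (ξ₁' : i₁ ≫ r' ⟶ q₁) (ξ₂' : i₂ ≫ r' ⟶ q₂),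
      ∃! η : r ⟶ r', ((i₁ ◁ η) ≫ ξ₁' = ξ₁) ∧ ((i₂ ◁ η) ≫ ξ₂' = ξ₂))

/-- 2-universal difference kernel of a parallel pair of 1-cells. -/
def IsDiffKernel {A C : B} (g h : A ⟶ C) (D : B) (d : D ⟶ A) (φ : d ≫ g ⟶ d ≫ h) : Prop :=
  (∀ (X : B) (e : X ⟶ A) (ψ : e ≫ g ⟶ e ≫ h),
    ∃ (e' : X ⟶ D) (ε' : e' ≫ d ⟶ e),
      (α_ e' d g).hom ≫ (e' ◁ φ) ≫ (α_ e' d h).inv ≫ (ε' ▷ h) = (ε' ▷ g) ≫ ψ)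
  ∧ (∀ (X : B) (e : X ⟶ A) (ψ : e ≫ g ⟶ e ≫ h)
      (e₁ e₂ : X ⟶ D) (ε₁ : e₁ ≫ d ⟶ e) (ε₂ : e₂ ≫ d ⟶ e),
      ((α_ e₁ d g).hom ≫ (e₁ ◁ φ) ≫ (α_ e₁ d h).inv ≫ (ε₁ ▷ h) = (ε₁ ▷ g) ≫ ψ) →
      ((α_ e₂ d g).hom ≫ (e₂ ◁ φ) ≫ (α_ e₂ d h).inv ≫ (ε₂ ▷ h) = (ε₂ ▷ g) ≫ ψ) →
      ∃! η : e₁ ⟶ e₂, (η ▷ d) ≫ ε₂ = ε₁)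

/-- 2-universal pullback of a cospan of 1-cells. -/
def IsPullback2 {A₁ A₂ C : B} (f₁ : A₁ ⟶ C) (f₂ : A₂ ⟶ C) (P : B)
    (p₁ : P ⟶ A₂) (p₂ : P ⟶ A₁) (ξ : p₁ ≫ f₂ ⟶ p₂ ≫ f₁) : Prop :=
  (∀ (X : B) (g₁ : X ⟶ A₂) (g₂ : X ⟶ A₁) (η : g₁ ≫ f₂ ⟶ g₂ ≫ f₁),
    ∃ (g : X ⟶ P) (ξ₁ : g ≫ p₁ ⟶ g₁) (ξ₂ : g ≫ p₂ ⟶ g₂),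
      (ξ₁ ▷ f₂) ≫ η = (α_ g p₁ f₂).hom ≫ (g ◁ ξ) ≫ (α_ g p₂ f₁).inv ≫ (ξ₂ ▷ f₁))
  ∧ (∀ (X : B) (g₁ : X ⟶ A₂) (g₂ : X ⟶ A₁) (η : g₁ ≫ f₂ ⟶ g₂ ≫ f₁)
      (g g' : X ⟶ P) (ξ₁ : g ≫ p₁ ⟶ g₁) (ξ₂ : g ≫ p₂ ⟶ g₂)
      (ξ₁' : g' ≫ p₁ ⟶ g₁) (ξ₂' : g' ≫ p₂ ⟶ g₂),
      ((ξ₁ ▷ f₂) ≫ η = (α_ g p₁ f₂).hom ≫ (g ◁ ξ) ≫ (α_ g p₂ f₁).inv ≫ (ξ₂ ▷ f₁)) →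
      ((ξ₁' ▷ f₂) ≫ η = (α_ g' p₁ f₂).hom ≫ (g' ◁ ξ) ≫ (α_ g' p₂ f₁).inv ≫ (ξ₂' ▷ f₁)) →
      ∃! ζ : g ⟶ g', ((ζ ▷ p₁) ≫ ξ₁' = ξ₁) ∧ ((ζ ▷ p₂) ≫ ξ₂' = ξ₂))

end Defs

/-- A locally SCG 2-category: each hom-category is a symmetric categorical group,
`Hom` is a 2-functor into SCG (expressed through the zero 1-cells, the unit
constraints `sharp`/`flat` of the monoidal functors `f ∘ −`, `− ∘ f` and their
coherence), there is a zero object, and binary (co)products exist. -/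
structure LocSCG (B : Type u) [Bicategory.{w, v} B] where
  /-- symmetric monoidal structure on each hom-category -/
  monStr : ∀ A C : B, MonoidalCategory (A ⟶ C)
  symm : ∀ A C : B, @SymmetricCategory (A ⟶ C) _ (monStr A C)
  /-- every 2-cell is invertible -/
  cellIso : ∀ {A C : B} {f g : A ⟶ C} (η : f ⟶ g), IsIso η
  /-- every 1-cell is ⊗-invertible up to an isomorphism -/
  objInv : ∀ {A C : B} (f : A ⟶ C),
    ∃ g : A ⟶ C, Nonempty (mtens (monStr A C) f g ≅ munit (monStr A C))
  /-- zero 1-cells compose to zero 1-cells -/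
  zero_comp : ∀ A C E : B, munit (monStr A C) ≫ munit (monStr C E) = munit (monStr A E)
  /-- unit constraint `f_I^♯ : f ∘ 0 ⟶ 0` of the monoidal functor `f ∘ −` -/
  sharp : ∀ {A C E : B} (f : A ⟶ C), f ≫ munit (monStr C E) ≅ munit (monStr A E)
  /-- unit constraint `f_I^♭ : 0 ∘ f ⟶ 0` of the monoidal functor `− ∘ f` -/
  flat : ∀ {A C E : B} (f : C ⟶ E), munit (monStr A C) ≫ f ≅ munit (monStr A E)
  sharp_natural : ∀ {A C E : B} {f g : A ⟶ C} (η : f ⟶ g),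
    (η ▷ munit (monStr C E)) ≫ (sharp g).hom = (sharp f).hom
  flat_natural : ∀ {A C E : B} {f g : C ⟶ E} (η : f ⟶ g),
    (munit (monStr A C) ◁ η) ≫ (flat g).hom = (flat f).hom
  /-- unit constraints of zero 1-cells are identities -/
  sharp_zero : ∀ A C E : B,
    (sharp (E := E) (munit (monStr A C))).hom = eqToHom (zero_comp A C E)
  flat_zero : ∀ A C E : B,
    (flat (A := A) (munit (monStr C E))).hom = eqToHom (zero_comp A C E)
  sharp_comp : ∀ {A C E G : B} (f : A ⟶ C) (g : C ⟶ E),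
    (sharp (E := G) (f ≫ g)).hom
      = (α_ f g (munit (monStr E G))).hom ≫ (f ◁ (sharp g).hom) ≫ (sharp f).hom
  flat_comp : ∀ {X A C E : B} (f : A ⟶ C) (g : C ⟶ E),
    (flat (A := X) (f ≫ g)).hom
      = (α_ (munit (monStr X A)) f g).inv ≫ ((flat f).hom ▷ g) ≫ (flat g).hom
  sharp_flat : ∀ {A C E G : B} (f : A ⟶ C) (g : E ⟶ G),
    ((sharp f).hom ▷ g) ≫ (flat g).hom
      = (α_ f (munit (monStr C E)) g).hom ≫ (f ◁ (flat g).hom) ≫ (sharp f).hom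
  /-- tensor constraint of the monoidal functor `k ∘ −` -/
  sharpTensor : ∀ {X A C : B} (k : X ⟶ A) (g h : A ⟶ C),
    k ≫ mtens (monStr A C) g h ≅ mtens (monStr X C) (k ≫ g) (k ≫ h)
  /-- tensor constraint of the monoidal functor `− ∘ k` -/
  flatTensor : ∀ {A C E : B} (k : C ⟶ E) (g h : A ⟶ C),
    mtens (monStr A C) g h ≫ k ≅ mtens (monStr A E) (g ≫ k) (h ≫ k)
  /-- the zero object -/
  zObj : B
  homZZ : ∀ f : zObj ⟶ zObj, f = munit (monStr zObj zObj)
  cellZZ : ∀ (f g : zObj ⟶ zObj) (η θ : f ⟶ g), η = θ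
  toZero : ∀ {A : B} (f : A ⟶ zObj), f ⟶ munit (monStr A zObj)
  toZero_unique : ∀ {A : B} (f : A ⟶ zObj) (η θ : f ⟶ munit (monStr A zObj)), η = θ
  fromZero : ∀ {A : B} (f : zObj ⟶ A), f ⟶ munit (monStr zObj A)
  fromZero_unique : ∀ {A : B} (f : zObj ⟶ A) (η θ : f ⟶ munit (monStr zObj A)), η = θ
  hasProd : ∀ A₁ A₂ : B, ∃ (P : B) (p₁ : P ⟶ A₁) (p₂ : P ⟶ A₂), IsProduct2 A₁ A₂ P p₁ p₂
  hasCoprod : ∀ A₁ A₂ : B, ∃ (P : B) (i₁ : A₁ ⟶ P) (i₂ : A₂ ⟶ P), IsCoproduct2 A₁ A₂ P i₁ i₂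

namespace LocSCG

variable {B : Type u} [Bicategory.{w, v} B]

/-- the zero 1-cell `0_{A,C}`. -/
def zro (S : LocSCG B) (A C : B) : A ⟶ C := munit (S.monStr A C)

/-- tensor product of parallel 1-cells in a hom-category. -/
def tens (S : LocSCG B) {A C : B} (f g : A ⟶ C) : A ⟶ C := mtens (S.monStr A C) f g

/-- tensor product of 2-cells in a hom-category. -/
def tensHom (S : LocSCG B) {A C : B} {f₁ g₁ f₂ g₂ : A ⟶ C} (η : f₁ ⟶ g₁) (θ : f₂ ⟶ g₂) :
    S.tens f₁ f₂ ⟶ S.tens g₁ g₂ :=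
  @MonoidalCategoryStruct.tensorHom _ _ (S.monStr A C).toMonoidalCategoryStruct _ _ _ _ η θ

/-- associator of the hom-category monoidal structure. -/
def tassoc (S : LocSCG B) {A C : B} (f g h : A ⟶ C) :
    S.tens (S.tens f g) h ≅ S.tens f (S.tens g h) :=
  @MonoidalCategoryStruct.associator _ _ (S.monStr A C).toMonoidalCategoryStruct f g h

/-- left unitor of the hom-category monoidal structure. -/
def tlunit (S : LocSCG B) {A C : B} (f : A ⟶ C) : S.tens (S.zro A C) f ≅ f :=
  @MonoidalCategoryStruct.leftUnitor _ _ (S.monStr A C).toMonoidalCategoryStruct f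

/-- right unitor of the hom-category monoidal structure. -/
def trunit (S : LocSCG B) {A C : B} (f : A ⟶ C) : S.tens f (S.zro A C) ≅ f :=
  @MonoidalCategoryStruct.rightUnitor _ _ (S.monStr A C).toMonoidalCategoryStruct f

/-- inverse of a 2-cell. -/
noncomputable def inv2 (S : LocSCG B) {A C : B} {f g : A ⟶ C} (η : f ⟶ g) : g ⟶ f :=
  @CategoryTheory.inv _ _ _ _ η (S.cellIso η)

variable (S : LocSCG B)

/-- `(K, k, ε)` is a (2-universal) kernel of `f`. -/
def IsKernel {A C : B} (f : A ⟶ C) (K : B) (k : K ⟶ A) (εk : k ≫ f ⟶ S.zro K C) : Prop :=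
  (∀ (X : B) (x : X ⟶ A) (e : x ≫ f ⟶ S.zro X C),
    ∃ (x' : X ⟶ K) (e' : x' ≫ k ⟶ x),
      (e' ▷ f) ≫ e = (α_ x' k f).hom ≫ (x' ◁ εk) ≫ (S.sharp x').hom)
  ∧ (∀ (X : B) (x : X ⟶ A) (e : x ≫ f ⟶ S.zro X C)
      (x₁ x₂ : X ⟶ K) (e₁ : x₁ ≫ k ⟶ x) (e₂ : x₂ ≫ k ⟶ x),
      ((e₁ ▷ f) ≫ e = (α_ x₁ k f).hom ≫ (x₁ ◁ εk) ≫ (S.sharp x₁).hom) →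
      ((e₂ ▷ f) ≫ e = (α_ x₂ k f).hom ≫ (x₂ ◁ εk) ≫ (S.sharp x₂).hom) →
      ∃! η : x₁ ⟶ x₂, (η ▷ k) ≫ e₂ = e₁)

/-- `(Q, c, π)` is a (2-universal) cokernel of `f`. -/
def IsCokernel {A C : B} (f : A ⟶ C) (Q : B) (c : C ⟶ Q) (π : f ≫ c ⟶ S.zro A Q) : Prop :=
  (∀ (X : B) (x : C ⟶ X) (e : f ≫ x ⟶ S.zro A X),
    ∃ (x' : Q ⟶ X) (e' : c ≫ x' ⟶ x),
      (f ◁ e') ≫ e = (α_ f c x').inv ≫ (π ▷ x') ≫ (S.flat x').hom)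
  ∧ (∀ (X : B) (x : C ⟶ X) (e : f ≫ x ⟶ S.zro A X)
      (x₁ x₂ : Q ⟶ X) (e₁ : c ≫ x₁ ⟶ x) (e₂ : c ≫ x₂ ⟶ x),
      ((f ◁ e₁) ≫ e = (α_ f c x₁).inv ≫ (π ▷ x₁) ≫ (S.flat x₁).hom) →
      ((f ◁ e₂) ≫ e = (α_ f c x₂).inv ≫ (π ▷ x₂) ≫ (S.flat x₂).hom) →
      ∃! η : x₁ ⟶ x₂, (c ◁ η) ≫ e₂ = e₁)

/-- compatibility of a candidate `(x, e)` with `φ` (relative kernel condition). -/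
def RelKerCompat {X A C E : B} (f : A ⟶ C) (g : C ⟶ E) (φ : f ≫ g ⟶ S.zro A E)
    (x : X ⟶ A) (e : x ≫ f ⟶ S.zro X C) : Prop :=
  (α_ x f g).hom ≫ (x ◁ φ) ≫ (S.sharp x).hom = (e ▷ g) ≫ (S.flat g).hom

/-- `(K, k, ε)` is a (2-universal) relative kernel `Ker(f, φ)` of `f : A ⟶ C`
relative to `g : C ⟶ E`, `φ : f ∘ g ⟶ 0`. -/
def IsRelKernel {A C E : B} (f : A ⟶ C) (g : C ⟶ E) (φ : f ≫ g ⟶ S.zro A E)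
    (K : B) (k : K ⟶ A) (εk : k ≫ f ⟶ S.zro K C) : Prop :=
  S.RelKerCompat f g φ k εk
  ∧ (∀ (X : B) (x : X ⟶ A) (e : x ≫ f ⟶ S.zro X C), S.RelKerCompat f g φ x e →
      ∃ (x' : X ⟶ K) (e' : x' ≫ k ⟶ x),
        (e' ▷ f) ≫ e = (α_ x' k f).hom ≫ (x' ◁ εk) ≫ (S.sharp x').hom)
  ∧ (∀ (X : B) (x : X ⟶ A) (e : x ≫ f ⟶ S.zro X C), S.RelKerCompat f g φ x e →
      ∀ (x₁ x₂ : X ⟶ K) (e₁ : x₁ ≫ k ⟶ x) (e₂ : x₂ ≫ k ⟶ x),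
        ((e₁ ▷ f) ≫ e = (α_ x₁ k f).hom ≫ (x₁ ◁ εk) ≫ (S.sharp x₁).hom) →
        ((e₂ ▷ f) ≫ e = (α_ x₂ k f).hom ≫ (x₂ ◁ εk) ≫ (S.sharp x₂).hom) →
        ∃! η : x₁ ⟶ x₂, (η ▷ k) ≫ e₂ = e₁)

/-- compatibility of a candidate `(x, e)` with `φ` (relative cokernel condition). -/
def RelCokCompat {A C E X : B} (f : A ⟶ C) (g : C ⟶ E) (φ : f ≫ g ⟶ S.zro A E)
    (x : E ⟶ X) (e : g ≫ x ⟶ S.zro C X) : Prop :=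
  (φ ▷ x) ≫ (S.flat x).hom = (α_ f g x).hom ≫ (f ◁ e) ≫ (S.sharp f).hom

/-- `(Q, c, π)` is a (2-universal) relative cokernel `Cok(g, φ)` of `g : C ⟶ E`
relative to `f : A ⟶ C`, `φ : f ∘ g ⟶ 0`. -/
def IsRelCokernel {A C E : B} (f : A ⟶ C) (g : C ⟶ E) (φ : f ≫ g ⟶ S.zro A E)
    (Q : B) (c : E ⟶ Q) (π : g ≫ c ⟶ S.zro C Q) : Prop :=
  S.RelCokCompat f g φ c π
  ∧ (∀ (X : B) (x : E ⟶ X) (e : g ≫ x ⟶ S.zro C X), S.RelCokCompat f g φ x e →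
      ∃ (x' : Q ⟶ X) (e' : c ≫ x' ⟶ x),
        (g ◁ e') ≫ e = (α_ g c x').inv ≫ (π ▷ x') ≫ (S.flat x').hom)
  ∧ (∀ (X : B) (x : E ⟶ X) (e : g ≫ x ⟶ S.zro C X), S.RelCokCompat f g φ x e →
      ∀ (x₁ x₂ : Q ⟶ X) (e₁ : c ≫ x₁ ⟶ x) (e₂ : c ≫ x₂ ⟶ x),
        ((g ◁ e₁) ≫ e = (α_ g c x₁).inv ≫ (π ▷ x₁) ≫ (S.flat x₁).hom) →
        ((g ◁ e₂) ≫ e = (α_ g c x₂).inv ≫ (π ▷ x₂) ≫ (S.flat x₂).hom) →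
        ∃! η : x₁ ⟶ x₂, (c ◁ η) ≫ e₂ = e₁)

/-- a 0-cell is zero if it is equivalent to the zero object. -/
def ZeroEq (X : B) : Prop := ∃ e : X ⟶ S.zObj, Is2Equiv e

/-- 2-exactness of `(f, g, φ)` in the middle 0-cell: the cokernel of the induced
factorization of `f` through any kernel of `g` is zero. -/
def TwoExact {A C E : B} (f : A ⟶ C) (g : C ⟶ E) (φ : f ≫ g ⟶ S.zro A E) : Prop :=
  ∀ (K : B) (k : K ⟶ C) (εk : k ≫ g ⟶ S.zro K E), S.IsKernel g K k εk →
  ∀ (fb : A ⟶ K) (φb : fb ≫ k ⟶ f),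
    ((φb ▷ g) ≫ φ = (α_ fb k g).hom ≫ (fb ◁ εk) ≫ (S.sharp fb).hom) →
    S.IsCokernel fb S.zObj (S.zro K S.zObj) (S.sharp fb).hom

/-- relative 2-exactness at the middle 0-cell `A₂` of a 5-term window
`A₀ → A₁ → A₂ → A₃ → A₄` of a complex: the relative cohomology
`H = Cok(k, ν₂)` is equivalent to the zero object. -/
def RelTwoExactWindow {A₀ A₁ A₂ A₃ A₄ : B}
    (d₀ : A₀ ⟶ A₁) (d₁ : A₁ ⟶ A₂) (d₂ : A₂ ⟶ A₃) (d₃ : A₃ ⟶ A₄)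
    (δ₁ : d₀ ≫ d₁ ⟶ S.zro A₀ A₂) (δ₂ : d₁ ≫ d₂ ⟶ S.zro A₁ A₃)
    (δ₃ : d₂ ≫ d₃ ⟶ S.zro A₂ A₄) : Prop :=
  ∀ (Z : B) (z : Z ⟶ A₂) (ζ : z ≫ d₂ ⟶ S.zro Z A₃),
    S.IsRelKernel d₂ d₃ δ₃ Z z ζ →
  ∀ (k : A₁ ⟶ Z) (ν₁ : k ≫ z ⟶ d₁) (ν₂ : d₀ ≫ k ⟶ S.zro A₀ Z),
    ((ν₁ ▷ d₂) ≫ δ₂ = (α_ k z d₂).hom ≫ (k ◁ ζ) ≫ (S.sharp k).hom) →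
    ((α_ d₀ k z).hom ≫ (d₀ ◁ ν₁) ≫ δ₁ = (ν₂ ▷ z) ≫ (S.flat z).hom) →
  ∀ (H : B) (c : Z ⟶ H) (π : k ≫ c ⟶ S.zro A₁ H),
    S.IsRelCokernel d₀ k ν₂ H c π → S.ZeroEq H

end LocSCG

/-- The remaining axioms of a relatively exact 2-category: existence of kernels and
cokernels, and the characterization of (co)faithful 1-cells. -/
structure IsRelExact {B : Type u} [Bicategory.{w, v} B] (S : LocSCG B) : Prop where
  hasKer : ∀ {A C : B} (f : A ⟶ C),
    ∃ (K : B) (k : K ⟶ A) (εk : k ≫ f ⟶ S.zro K C), S.IsKernel f K k εk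
  hasCok : ∀ {A C : B} (f : A ⟶ C),
    ∃ (Q : B) (c : C ⟶ Q) (π : f ≫ c ⟶ S.zro A Q), S.IsCokernel f Q c π
  faithful_iff : ∀ {A C : B} (f : A ⟶ C) (Q : B) (c : C ⟶ Q) (π : f ≫ c ⟶ S.zro A Q),
    S.IsCokernel f Q c π → (CFaithful f ↔ S.IsKernel c A f π)
  cofaithful_iff : ∀ {A C : B} (f : A ⟶ C) (K : B) (k : K ⟶ A) (εk : k ≫ f ⟶ S.zro K C),
    S.IsKernel f K k εk → (CCofaithful f ↔ S.IsCokernel k C f εk)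

/-- A (cochain) complex in a locally SCG 2-category. -/
structure Cpx {B : Type u} [Bicategory.{w, v} B] (S : LocSCG B) where
  X : ℤ → B
  d : ∀ n : ℤ, X n ⟶ X (n + 1)
  δ : ∀ n : ℤ, d n ≫ d (n + 1) ⟶ S.zro (X n) (X (n + 1 + 1))
  compat : ∀ n : ℤ,
    (α_ (d n) (d (n + 1)) (d (n + 1 + 1))).hom ≫ (d n ◁ δ (n + 1)) ≫ (S.sharp (d n)).hom
      = (δ n ▷ d (n + 1 + 1)) ≫ (S.flat (d (n + 1 + 1))).hom

/-- A morphism of complexes. -/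
structure CpxMor {B : Type u} [Bicategory.{w, v} B] (S : LocSCG B) (A₁ A₂ : Cpx S) where
  f : ∀ n : ℤ, A₁.X n ⟶ A₂.X n
  lam : ∀ n : ℤ, A₁.d n ≫ f (n + 1) ⟶ f n ≫ A₂.d n
  compat : ∀ n : ℤ,
    (A₁.δ n ▷ f (n + 1 + 1)) ≫ (S.flat (f (n + 1 + 1))).hom
      = (α_ (A₁.d n) (A₁.d (n + 1)) (f (n + 1 + 1))).hom ≫ (A₁.d n ◁ lam (n + 1))
          ≫ (α_ (A₁.d n) (f (n + 1)) (A₂.d (n + 1))).inv ≫ (lam n ▷ A₂.d (n + 1))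
          ≫ (α_ (f n) (A₂.d n) (A₂.d (n + 1))).hom ≫ (f n ◁ A₂.δ n) ≫ (S.sharp (f n)).hom

/-- An extension of complexes: degreewise an extension, with compatible 2-cells. -/
def IsCpxExtension {B : Type u} [Bicategory.{w, v} B] (S : LocSCG B) {A₁ A₂ A₃ : Cpx S}
    (F : CpxMor S A₁ A₂) (G : CpxMor S A₂ A₃)
    (φ : ∀ n : ℤ, F.f n ≫ G.f n ⟶ S.zro (A₁.X n) (A₃.X n)) : Prop :=
  (∀ n : ℤ, S.IsKernel (G.f n) (A₁.X n) (F.f n) (φ n)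
      ∧ S.IsCokernel (F.f n) (A₃.X n) (G.f n) (φ n))
  ∧ (∀ n : ℤ,
      (F.lam n ▷ G.f (n + 1)) ≫ (α_ (F.f n) (A₂.d n) (G.f (n + 1))).hom
          ≫ (F.f n ◁ G.lam n) ≫ (α_ (F.f n) (G.f n) (A₃.d n)).inv
          ≫ (φ n ▷ A₃.d n) ≫ (S.flat (A₃.d n)).hom
        = (α_ (A₁.d n) (F.f (n + 1)) (G.f (n + 1))).hom ≫ (A₁.d n ◁ φ (n + 1))
            ≫ (S.sharp (A₁.d n)).hom)

/-- A witness for the (relative) cohomology `H = Cok(k, ν₂)` of a complex at the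
0-cell `X (m + 2)`. -/
structure HWitness {B : Type u} [Bicategory.{w, v} B] (S : LocSCG B) (A : Cpx S) (m : ℤ) where
  Z : B
  z : Z ⟶ A.X (m + 1 + 1)
  ζ : z ≫ A.d (m + 1 + 1) ⟶ S.zro Z (A.X (m + 1 + 1 + 1))
  isZ : S.IsRelKernel (A.d (m + 1 + 1)) (A.d (m + 1 + 1 + 1)) (A.δ (m + 1 + 1)) Z z ζ
  k : A.X (m + 1) ⟶ Z
  ν₁ : k ≫ z ⟶ A.d (m + 1)
  ν₂ : A.d m ≫ k ⟶ S.zro (A.X m) Z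
  hν₁ : (ν₁ ▷ A.d (m + 1 + 1)) ≫ A.δ (m + 1)
      = (α_ k z (A.d (m + 1 + 1))).hom ≫ (k ◁ ζ) ≫ (S.sharp k).hom
  hν₂ : (α_ (A.d m) k z).hom ≫ (A.d m ◁ ν₁) ≫ A.δ m = (ν₂ ▷ z) ≫ (S.flat z).hom
  H : B
  c : Z ⟶ H
  π : k ≫ c ⟶ S.zro (A.X (m + 1)) H
  isH : S.IsRelCokernel (A.d m) k ν₂ H c π

namespace Stmt19Aux

open CategoryTheory Bicategory


variable {B : Type u} [Bicategory.{w, v} B] [Bicategory.Strict B] (S : LocSCG B)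

attribute [local simp] Bicategory.Strict.associator_eqToIso
  Bicategory.Strict.leftUnitor_eqToIso Bicategory.Strict.rightUnitor_eqToIso

lemma comp_inv2 {A C : B} {f g : A ⟶ C} (η : f ⟶ g) : η ≫ S.inv2 η = 𝟙 f := by
  unfold LocSCG.inv2
  letI := S.cellIso η
  simp

lemma inv2_comp {A C : B} {f g : A ⟶ C} (η : f ⟶ g) : S.inv2 η ≫ η = 𝟙 g := by
  unfold LocSCG.inv2
  letI := S.cellIso η
  simp

lemma inv2_comp_assoc {A C : B} {f g h : A ⟶ C} (η : f ⟶ g) (θ : g ⟶ h) :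
    S.inv2 η ≫ (η ≫ θ) = θ := by
  rw [← Category.assoc, inv2_comp, Category.id_comp]

lemma sharp_heq {A C E : B} {f g : A ⟶ C} (p : f = g) :
    (S.sharp (E := E) f).hom = eqToHom (by rw [p]) ≫ (S.sharp g).hom := by
  subst p; simp

lemma flat_heq {A C E : B} {f g : C ⟶ E} (p : f = g) :
    (S.flat (A := A) f).hom = eqToHom (by rw [p]) ≫ (S.flat g).hom := by
  subst p; simp


lemma sharp_id {X E : B} : (S.sharp (E := E) (𝟙 X)).hom = eqToHom (Category.id_comp _) := by
  have h := S.sharp_comp (E := X) (G := E) (𝟙 X) (𝟙 X)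
  rw [sharp_heq S (Category.id_comp (𝟙 X))] at h
  simp only [id_whiskerLeft, Bicategory.Strict.leftUnitor_eqToIso,
    Bicategory.Strict.associator_eqToIso, eqToIso.hom, eqToIso.inv, Category.assoc] at h
  rw [eqToHom_trans_assoc] at h
  simp only [← Category.assoc] at h
  have h4 := (cancel_mono (S.sharp (E := E) (𝟙 X)).hom).mp h
  rw [eq_comm, comp_eqToHom_iff] at h4
  rw [eqToHom_comp_iff] at h4
  rw [h4]
  simp

lemma flat_id {A X : B} : (S.flat (A := A) (𝟙 X)).hom = eqToHom (Category.comp_id _) := by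
  have h := S.flat_comp (X := A) (𝟙 X) (𝟙 X)
  rw [flat_heq S (Category.id_comp (𝟙 X))] at h
  simp only [Bicategory.whiskerRight_id, Bicategory.Strict.rightUnitor_eqToIso,
    Bicategory.Strict.associator_eqToIso, eqToIso.hom, eqToIso.inv, Category.assoc,
    eqToHom_trans_assoc] at h
  simp only [← Category.assoc] at h
  have h4 := (cancel_mono (S.flat (A := A) (𝟙 X)).hom).mp h
  rw [eq_comm, comp_eqToHom_iff] at h4
  rw [eqToHom_comp_iff] at h4
  rw [h4]
  simp

lemma whiskerLeft_inv2 {A C E : B} (f : A ⟶ C) {g h : C ⟶ E} (η : g ⟶ h) :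
    (f ◁ η) ≫ (f ◁ S.inv2 η) = 𝟙 (f ≫ g) := by
  rw [← Bicategory.whiskerLeft_comp, comp_inv2, Bicategory.whiskerLeft_id]

lemma inv2_whiskerLeft {A C E : B} (f : A ⟶ C) {g h : C ⟶ E} (η : g ⟶ h) :
    (f ◁ S.inv2 η) ≫ (f ◁ η) = 𝟙 (f ≫ h) := by
  rw [← Bicategory.whiskerLeft_comp, inv2_comp, Bicategory.whiskerLeft_id]

/-- The universal trivialization pattern: if the cokernel of `f` is the zero object,
then any 1-cell out of the target of `f` that kills `f` is itself trivializable,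
compatibly. -/
lemma cok_zero_lift {A K X : B} (f : A ⟶ K)
    (hc : S.IsCokernel f S.zObj (munit (S.monStr K S.zObj)) (S.sharp f).hom)
    (x : K ⟶ X) (e : f ≫ x ⟶ munit (S.monStr A X)) :
    ∃ θ : x ⟶ munit (S.monStr K X), e = (f ◁ θ) ≫ (S.sharp f).hom := by
  obtain ⟨t, e', he⟩ := hc.1 X x e
  unfold LocSCG.zro at *
  refine ⟨S.inv2 e' ≫ (S.flat t).hom, ?_⟩
  calc e = (f ◁ S.inv2 e') ≫ ((f ◁ e') ≫ e) := by
          rw [← Category.assoc, inv2_whiskerLeft, Category.id_comp]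
    _ = (f ◁ S.inv2 e') ≫ ((α_ f (munit (S.monStr K S.zObj)) t).inv
          ≫ ((S.sharp f).hom ▷ t) ≫ (S.flat t).hom) := by rw [he]
    _ = (f ◁ S.inv2 e') ≫ ((α_ f (munit (S.monStr K S.zObj)) t).inv
          ≫ (α_ f (munit (S.monStr K S.zObj)) t).hom ≫ (f ◁ (S.flat t).hom) ≫ (S.sharp f).hom) := by
          rw [S.sharp_flat]
    _ = (f ◁ (S.inv2 e' ≫ (S.flat t).hom)) ≫ (S.sharp f).hom := by
          rw [Iso.inv_hom_id_assoc, Bicategory.whiskerLeft_comp, Category.assoc]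

section Faithful

variable {A C E : B} {f : A ⟶ C} {g : C ⟶ E} {φ : f ≫ g ⟶ munit (S.monStr A E)}
  {Z : B} {z : Z ⟶ A} {ζ : z ≫ f ⟶ munit (S.monStr Z C)}

lemma relker_pair_compat (hZ : S.IsRelKernel f g φ Z z ζ) {X : B} (x : X ⟶ Z) :
    S.RelKerCompat f g φ (x ≫ z)
      ((α_ x z f).hom ≫ (x ◁ ζ) ≫ (S.sharp x).hom) := by
  unfold LocSCG.IsRelKernel LocSCG.RelKerCompat LocSCG.zro at *
  have hz' : (z ◁ φ) ≫ (S.sharp z).hom = (α_ z f g).inv ≫ (ζ ▷ g) ≫ (S.flat g).hom := by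
    rw [← hZ.1, Iso.inv_hom_id_assoc]
  show (α_ (x ≫ z) f g).hom ≫ ((x ≫ z) ◁ φ) ≫ (S.sharp (x ≫ z)).hom = _
  rw [Bicategory.comp_whiskerLeft, S.sharp_comp x z]
  simp only [LocSCG.zro, Category.assoc] at hz' ⊢
  rw [Iso.inv_hom_id_assoc, ← Bicategory.whiskerLeft_comp_assoc, hz']
  simp only [Bicategory.whiskerLeft_comp, Bicategory.comp_whiskerRight,
    Bicategory.whisker_assoc, Category.assoc]
  rw [S.sharp_flat]
  simp only [Bicategory.comp_whiskerRight, Bicategory.whisker_assoc, Category.assoc,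
    Bicategory.Strict.associator_eqToIso, eqToIso.hom, eqToIso.inv,
    Bicategory.whiskerLeft_eqToHom, Bicategory.eqToHom_whiskerRight,
    eqToHom_trans, eqToHom_trans_assoc, eqToHom_refl, Category.id_comp, Category.comp_id]

lemma relker_proj_faithful (hZ : S.IsRelKernel f g φ Z z ζ) : CFaithful z := by
  intro X g' h' η θ hw
  have compat := relker_pair_compat S hZ h'
  have cond2 : ((𝟙 (h' ≫ z)) ▷ f) ≫ ((α_ h' z f).hom ≫ (h' ◁ ζ) ≫ (S.sharp h').hom)
      = (α_ h' z f).hom ≫ (h' ◁ ζ) ≫ (S.sharp h').hom := by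
    simp [Bicategory.id_whiskerRight]
  have cond1 : ∀ (ξ : g' ⟶ h'), ((ξ ▷ z) ▷ f) ≫ ((α_ h' z f).hom ≫ (h' ◁ ζ) ≫ (S.sharp h').hom)
      = (α_ g' z f).hom ≫ (g' ◁ ζ) ≫ (S.sharp g').hom := by
    intro ξ
    calc ((ξ ▷ z) ▷ f) ≫ ((α_ h' z f).hom ≫ (h' ◁ ζ) ≫ (S.sharp h').hom)
        = (((ξ ▷ z) ▷ f) ≫ (α_ h' z f).hom) ≫ ((h' ◁ ζ) ≫ (S.sharp h').hom) := by
          simp only [Category.assoc]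
      _ = ((α_ g' z f).hom ≫ (ξ ▷ (z ≫ f))) ≫ ((h' ◁ ζ) ≫ (S.sharp h').hom) := by
          rw [Bicategory.associator_naturality_left]
      _ = (α_ g' z f).hom ≫ ((ξ ▷ (z ≫ f)) ≫ (h' ◁ ζ)) ≫ (S.sharp h').hom := by
          simp only [Category.assoc]
      _ = (α_ g' z f).hom ≫ ((g' ◁ ζ) ≫ (ξ ▷ munit (S.monStr Z C))) ≫ (S.sharp h').hom := by
          rw [Bicategory.whisker_exchange]
      _ = (α_ g' z f).hom ≫ (g' ◁ ζ) ≫ (S.sharp g').hom := by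
          simp only [Category.assoc]
          rw [show (ξ ▷ munit (S.monStr Z C)) ≫ (S.sharp h').hom = (S.sharp g').hom from S.sharp_natural ξ]
  obtain ⟨u, hu, huniq⟩ := hZ.2.2 X (h' ≫ z)
    ((α_ h' z f).hom ≫ (h' ◁ ζ) ≫ (S.sharp h').hom) compat g' h'
    (η ▷ z) (𝟙 (h' ≫ z)) (cond1 η) cond2
  have e1 := huniq η (by simp)
  have e2 := huniq θ (by simpa using hw.symm)
  rw [e1, e2]

end Faithful

end Stmt19Aux

open Stmt19Aux in
theorem stmt19' {B : Type u} [Bicategory.{w, v} B] [Bicategory.Strict B]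
    (S : LocSCG B) (hS : IsRelExact S)
    (A : Cpx S) (m : ℤ)
    (h : S.TwoExact (A.d (m + 1)) (A.d (m + 1 + 1)) (A.δ (m + 1))) :
    S.RelTwoExactWindow (A.d m) (A.d (m + 1)) (A.d (m + 1 + 1)) (A.d (m + 1 + 1 + 1))
      (A.δ m) (A.δ (m + 1)) (A.δ (m + 1 + 1)) := by
  intro Z z ζ isZ k ν₁ ν₂ hν₁ hν₂ H c π isH
  generalize A.δ m = δ₀ at hν₂
  generalize A.δ (m + 1) = δ₁ at h hν₁
  generalize A.δ (m + 1 + 1) = δ₂ at isZ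
  unfold LocSCG.zro at *
  -- Step 1: an ordinary kernel K of d₂ and the comparison w : Z ⟶ K
  obtain ⟨K, kK, εK, isK⟩ := hS.hasKer (A.d (m + 1 + 1))
  unfold LocSCG.zro at *
  obtain ⟨w, ω, hω⟩ := isK.1 Z z ζ
  unfold LocSCG.zro at *
  -- Step 2: z and w are faithful
  have zfaith : CFaithful z := relker_proj_faithful S isZ
  have wfaith : CFaithful w := by
    unfold LocSCG.zro at *
    intro X g' h' η θ hwh
    apply zfaith
    have exg : ∀ (ξ : g' ⟶ h'), ξ ▷ z
        = S.inv2 (g' ◁ ω) ≫ ((α_ g' w kK).inv ≫ ((ξ ▷ w) ▷ kK) ≫ (α_ h' w kK).hom)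
          ≫ (h' ◁ ω) := by
      intro ξ
      calc ξ ▷ z = S.inv2 (g' ◁ ω) ≫ ((g' ◁ ω) ≫ (ξ ▷ z)) :=
            (inv2_comp_assoc S (g' ◁ ω) (ξ ▷ z)).symm
        _ = S.inv2 (g' ◁ ω) ≫ ((ξ ▷ (w ≫ kK)) ≫ (h' ◁ ω)) := by
            rw [Bicategory.whisker_exchange]
        _ = _ := by simp only [Bicategory.whiskerRight_comp, Category.assoc]
    rw [exg η, exg θ, hwh]
  -- Step 3: the factorization fb = k ≫ w of d₁ through K, and 2-exactness
  have hφb : (((α_ k w kK).hom ≫ (k ◁ ω) ≫ ν₁) ▷ A.d (m + 1 + 1)) ≫ δ₁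
      = (α_ (k ≫ w) kK (A.d (m + 1 + 1))).hom ≫ ((k ≫ w) ◁ εK)
        ≫ (S.sharp (k ≫ w)).hom := by
    unfold LocSCG.zro at *
    simp only [Bicategory.comp_whiskerRight, Category.assoc]
    rw [hν₁]
    rw [Bicategory.whisker_assoc]
    simp only [Category.assoc]
    rw [Iso.inv_hom_id_assoc]
    rw [← Bicategory.whiskerLeft_comp_assoc, hω]
    rw [S.sharp_comp k w]
    simp only [Bicategory.whiskerLeft_comp, Bicategory.comp_whiskerRight,
    Bicategory.whisker_assoc, Bicategory.comp_whiskerLeft, Bicategory.whiskerRight_comp,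
    Bicategory.id_whiskerLeft, Bicategory.whiskerRight_id, Bicategory.whiskerLeft_id,
    Bicategory.id_whiskerRight, Bicategory.Strict.associator_eqToIso,
    Bicategory.Strict.leftUnitor_eqToIso, Bicategory.Strict.rightUnitor_eqToIso,
    eqToIso.hom, eqToIso.inv, Bicategory.whiskerLeft_eqToHom, Bicategory.eqToHom_whiskerRight,
    eqToHom_trans, eqToHom_trans_assoc, eqToHom_refl, Category.assoc, Category.id_comp,
    Category.comp_id, LocSCG.zro]
  have hCok := h K kK εK isK (k ≫ w) ((α_ k w kK).hom ≫ (k ◁ ω) ≫ ν₁) hφb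
  -- Step 4: the cokernel V of w, and Z as kernel of cv
  obtain ⟨V, cv, πv, isCokV⟩ := hS.hasCok w
  unfold LocSCG.zro at *
  have isKw := (hS.faithful_iff w V cv πv isCokV).mp wfaith
  -- Step 5: trivialize cv using 2-exactness
  obtain ⟨θv, -⟩ := cok_zero_lift S (k ≫ w) hCok cv
    ((α_ k w cv).hom ≫ (k ◁ πv) ≫ (S.sharp k).hom)
  -- Step 6: the quasi-section u : K ⟶ Z of w
  obtain ⟨u, e_u, -⟩ := isKw.1 K (𝟙 K) (eqToHom (Category.id_comp cv) ≫ θv)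
  -- Step 7: the 2-cell ξ : w ≫ u ⟶ 𝟙 Z via the relative kernel property of Z
  have condB : (((α_ w u z).hom ≫ (w ◁ ((u ◁ S.inv2 ω) ≫ (α_ u w kK).inv
        ≫ (e_u ▷ kK) ≫ eqToHom (Category.id_comp kK))) ≫ ω) ▷ A.d (m + 1 + 1)) ≫ ζ
      = (α_ (w ≫ u) z (A.d (m + 1 + 1))).hom ≫ ((w ≫ u) ◁ ζ) ≫ (S.sharp (w ≫ u)).hom := by
    unfold LocSCG.zro at *
    have hω' : (w ◁ εK) ≫ (S.sharp w).hom
        = (α_ w kK (A.d (m + 1 + 1))).inv ≫ (ω ▷ A.d (m + 1 + 1)) ≫ ζ := by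
      rw [hω, Iso.inv_hom_id_assoc]
    have sub : ((u ◁ S.inv2 ω ≫ (α_ u w kK).inv ≫ e_u ▷ kK
          ≫ eqToHom (Category.id_comp kK)) ▷ A.d (m + 1 + 1)) ≫ εK
        = (α_ u z (A.d (m + 1 + 1))).hom ≫ (u ◁ ζ) ≫ (S.sharp u).hom := by
      unfold LocSCG.zro at *
      simp only [Bicategory.comp_whiskerRight, Bicategory.eqToHom_whiskerRight, Category.assoc]
      rw [show ((e_u ▷ kK) ▷ A.d (m + 1 + 1)) = (α_ (u ≫ w) kK (A.d (m + 1 + 1))).hom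
            ≫ (e_u ▷ (kK ≫ A.d (m + 1 + 1))) ≫ (α_ (𝟙 K) kK (A.d (m + 1 + 1))).inv from by
        rw [Bicategory.whiskerRight_comp]; simp]
      have n0 := S.sharp_natural (E := A.X (m + 1 + 1 + 1)) e_u
      rw [sharp_id] at n0
      rw [comp_eqToHom_iff] at n0
      have canc0 : (u ◁ (S.inv2 ω ▷ A.d (m + 1 + 1))) ≫ (u ◁ (ω ▷ A.d (m + 1 + 1)))
          = 𝟙 (u ≫ (z ≫ A.d (m + 1 + 1))) := by
        rw [← Bicategory.whiskerLeft_comp, ← Bicategory.comp_whiskerRight, inv2_comp,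
          Bicategory.id_whiskerRight, Bicategory.whiskerLeft_id]
      have canc : ∀ {Y : K ⟶ A.X (m + 1 + 1 + 1)} (ρ : u ≫ (z ≫ A.d (m + 1 + 1)) ⟶ Y),
          (u ◁ (S.inv2 ω ▷ A.d (m + 1 + 1))) ≫ ((u ◁ (ω ▷ A.d (m + 1 + 1))) ≫ ρ) = ρ := by
        unfold LocSCG.zro at *
        intro Y ρ
        have hh : ((u ◁ (S.inv2 ω ▷ A.d (m + 1 + 1))) ≫ (u ◁ (ω ▷ A.d (m + 1 + 1)))) ≫ ρ
            = ρ := by rw [canc0, Category.id_comp]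
        simpa [Category.assoc] using hh
      have t2 : (α_ (𝟙 K) kK (A.d (m + 1 + 1))).inv
            ≫ (eqToHom (by rw [Category.id_comp]) :
                (𝟙 K ≫ kK) ≫ A.d (m + 1 + 1) ⟶ kK ≫ A.d (m + 1 + 1)) ≫ εK
          = (𝟙 K ◁ εK) ≫ eqToHom (Category.id_comp _) := by
        unfold LocSCG.zro at *
        simp only [Bicategory.whiskerLeft_comp, Bicategory.comp_whiskerRight,
        Bicategory.whisker_assoc, Bicategory.comp_whiskerLeft, Bicategory.whiskerRight_comp,
        Bicategory.id_whiskerLeft, Bicategory.whiskerRight_id, Bicategory.whiskerLeft_id,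
        Bicategory.id_whiskerRight, Bicategory.Strict.associator_eqToIso,
        Bicategory.Strict.leftUnitor_eqToIso, Bicategory.Strict.rightUnitor_eqToIso,
        eqToIso.hom, eqToIso.inv, Bicategory.whiskerLeft_eqToHom, Bicategory.eqToHom_whiskerRight,
        eqToHom_trans, eqToHom_trans_assoc, eqToHom_refl, Category.assoc, Category.id_comp,
        Category.comp_id, LocSCG.zro]
      simp only [Category.assoc]
      rw [t2]
      rw [← Category.assoc (e_u ▷ (kK ≫ A.d (m + 1 + 1))), ← Bicategory.whisker_exchange]
      simp only [LocSCG.zro, Category.assoc]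
      rw [n0]
      simp only [Category.assoc]
      rw [S.sharp_comp u w, Bicategory.comp_whiskerLeft]
      simp only [Category.assoc]
      rw [Iso.inv_hom_id_assoc]
      rw [← Bicategory.whiskerLeft_comp_assoc, hω']
      simp only [canc, Bicategory.whiskerLeft_comp, Bicategory.comp_whiskerRight,
        Bicategory.whisker_assoc, Bicategory.comp_whiskerLeft, Bicategory.whiskerRight_comp,
        Bicategory.id_whiskerLeft, Bicategory.whiskerRight_id, Bicategory.whiskerLeft_id,
        Bicategory.id_whiskerRight, Bicategory.Strict.associator_eqToIso,
        Bicategory.Strict.leftUnitor_eqToIso, Bicategory.Strict.rightUnitor_eqToIso,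
        eqToIso.hom, eqToIso.inv, Bicategory.whiskerLeft_eqToHom, Bicategory.eqToHom_whiskerRight,
        eqToHom_trans, eqToHom_trans_assoc, eqToHom_refl, Category.assoc, Category.id_comp,
        Category.comp_id, LocSCG.zro]
    simp only [Bicategory.comp_whiskerRight, Category.assoc]
    rw [hω]
    rw [Bicategory.whisker_assoc]
    simp only [Category.assoc]
    rw [Iso.inv_hom_id_assoc]
    rw [← Bicategory.whiskerLeft_comp_assoc]
    rw [sub]
    rw [S.sharp_comp w u]
    simp only [Bicategory.whiskerLeft_comp, Bicategory.comp_whiskerRight,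
      Bicategory.whisker_assoc, Bicategory.comp_whiskerLeft, Bicategory.whiskerRight_comp,
      Bicategory.id_whiskerLeft, Bicategory.whiskerRight_id, Bicategory.whiskerLeft_id,
      Bicategory.id_whiskerRight, Bicategory.Strict.associator_eqToIso,
      Bicategory.Strict.leftUnitor_eqToIso, Bicategory.Strict.rightUnitor_eqToIso,
      eqToIso.hom, eqToIso.inv, Bicategory.whiskerLeft_eqToHom, Bicategory.eqToHom_whiskerRight,
      eqToHom_trans, eqToHom_trans_assoc, eqToHom_refl, Category.assoc, Category.id_comp,
      Category.comp_id, LocSCG.zro]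
  have condC : ((eqToHom (Category.id_comp z)) ▷ A.d (m + 1 + 1)) ≫ ζ
      = (α_ (𝟙 Z) z (A.d (m + 1 + 1))).hom ≫ ((𝟙 Z) ◁ ζ) ≫ (S.sharp (𝟙 Z)).hom := by
    unfold LocSCG.zro at *
    simp only [sharp_id, Bicategory.whiskerLeft_comp, Bicategory.comp_whiskerRight,
    Bicategory.whisker_assoc, Bicategory.comp_whiskerLeft, Bicategory.whiskerRight_comp,
    Bicategory.id_whiskerLeft, Bicategory.whiskerRight_id, Bicategory.whiskerLeft_id,
    Bicategory.id_whiskerRight, Bicategory.Strict.associator_eqToIso,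
    Bicategory.Strict.leftUnitor_eqToIso, Bicategory.Strict.rightUnitor_eqToIso,
    eqToIso.hom, eqToIso.inv, Bicategory.whiskerLeft_eqToHom, Bicategory.eqToHom_whiskerRight,
    eqToHom_trans, eqToHom_trans_assoc, eqToHom_refl, Category.assoc, Category.id_comp,
    Category.comp_id, LocSCG.zro]
  obtain ⟨ξ, -, -⟩ := isZ.2.2 Z z ζ isZ.1 (w ≫ u) (𝟙 Z)
    ((α_ w u z).hom ≫ (w ◁ ((u ◁ S.inv2 ω) ≫ (α_ u w kK).inv
        ≫ (e_u ▷ kK) ≫ eqToHom (Category.id_comp kK))) ≫ ω)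
    (eqToHom (Category.id_comp z)) condB condC
  -- Step 8: descend c along w and trivialize it
  obtain ⟨θt, hθt⟩ := cok_zero_lift S (k ≫ w) hCok (u ≫ c)
    ((α_ k w (u ≫ c)).hom
      ≫ (k ◁ ((α_ w u c).inv ≫ (ξ ▷ c) ≫ eqToHom (Category.id_comp c))) ≫ π)
  -- Step 9: the trivialization θ of c and its compatibility
  have hstar : (k ◁ (S.inv2 ((α_ w u c).inv ≫ (ξ ▷ c) ≫ eqToHom (Category.id_comp c))
        ≫ (w ◁ θt) ≫ (S.sharp w).hom)) ≫ (S.sharp k).hom = π := by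
    unfold LocSCG.zro at *
    have hpi : π = (k ◁ S.inv2 ((α_ w u c).inv ≫ (ξ ▷ c) ≫ eqToHom (Category.id_comp c)))
        ≫ (α_ k w (u ≫ c)).inv ≫ (((k ≫ w) ◁ θt) ≫ (S.sharp (k ≫ w)).hom) := by
      rw [← hθt, Iso.inv_hom_id_assoc, ← Category.assoc, inv2_whiskerLeft, Category.id_comp]
    rw [hpi]
    simp only [S.sharp_comp, Bicategory.whiskerLeft_comp, Bicategory.comp_whiskerRight,
      Bicategory.whisker_assoc, Bicategory.comp_whiskerLeft, Bicategory.whiskerRight_comp,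
      Bicategory.id_whiskerLeft, Bicategory.whiskerRight_id, Bicategory.whiskerLeft_id,
      Bicategory.id_whiskerRight, Bicategory.Strict.associator_eqToIso,
      Bicategory.Strict.leftUnitor_eqToIso, Bicategory.Strict.rightUnitor_eqToIso,
      eqToIso.hom, eqToIso.inv, Bicategory.whiskerLeft_eqToHom, Bicategory.eqToHom_whiskerRight,
      eqToHom_trans, eqToHom_trans_assoc, eqToHom_refl, Category.assoc, Category.id_comp,
      Category.comp_id, LocSCG.zro]
  set θ := S.inv2 ((α_ w u c).inv ≫ (ξ ▷ c) ≫ eqToHom (Category.id_comp c))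
        ≫ (w ◁ θt) ≫ (S.sharp w).hom with hθdef
  -- Step 10: endgame, comparing 𝟙 H with the zero 1-cell
  have condE : (k ◁ (eqToHom (Category.comp_id c))) ≫ π
      = (α_ k c (𝟙 H)).inv ≫ (π ▷ 𝟙 H) ≫ (S.flat (𝟙 H)).hom := by
    unfold LocSCG.zro at *
    simp only [flat_id, Bicategory.whiskerLeft_comp, Bicategory.comp_whiskerRight,
    Bicategory.whisker_assoc, Bicategory.comp_whiskerLeft, Bicategory.whiskerRight_comp,
    Bicategory.id_whiskerLeft, Bicategory.whiskerRight_id, Bicategory.whiskerLeft_id,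
    Bicategory.id_whiskerRight, Bicategory.Strict.associator_eqToIso,
    Bicategory.Strict.leftUnitor_eqToIso, Bicategory.Strict.rightUnitor_eqToIso,
    eqToIso.hom, eqToIso.inv, Bicategory.whiskerLeft_eqToHom, Bicategory.eqToHom_whiskerRight,
    eqToHom_trans, eqToHom_trans_assoc, eqToHom_refl, Category.assoc, Category.id_comp,
    Category.comp_id, LocSCG.zro]
  have condF : (k ◁ ((S.sharp c).hom ≫ S.inv2 θ)) ≫ π
      = (α_ k c (munit (S.monStr H H))).inv ≫ (π ▷ munit (S.monStr H H)) ≫ (S.flat (munit (S.monStr H H))).hom := by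
    unfold LocSCG.zro at *
    have key : (k ◁ S.inv2 θ) ≫ π = (S.sharp k).hom := by
      rw [← hstar, ← Category.assoc, inv2_whiskerLeft, Category.id_comp]
    have hR : (α_ k c (munit (S.monStr H H))).inv ≫ (π ▷ munit (S.monStr H H)) ≫ (S.flat (munit (S.monStr H H))).hom
        = (k ◁ (S.sharp c).hom) ≫ (S.sharp k).hom := by
      unfold LocSCG.zro at *
      rw [show (S.flat (A := A.X (m + 1)) (munit (S.monStr H H))).hom
            = (S.sharp (E := H) (munit (S.monStr (A.X (m + 1)) H))).hom from by
          rw [S.flat_zero, S.sharp_zero]]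
      rw [show (π ▷ munit (S.monStr H H)) ≫ (S.sharp (E := H) (munit (S.monStr (A.X (m + 1)) H))).hom
            = (S.sharp (k ≫ c)).hom from S.sharp_natural π]
      rw [S.sharp_comp k c]
      simp only [Bicategory.whiskerLeft_comp, Bicategory.comp_whiskerRight,
    Bicategory.whisker_assoc, Bicategory.comp_whiskerLeft, Bicategory.whiskerRight_comp,
    Bicategory.id_whiskerLeft, Bicategory.whiskerRight_id, Bicategory.whiskerLeft_id,
    Bicategory.id_whiskerRight, Bicategory.Strict.associator_eqToIso,
    Bicategory.Strict.leftUnitor_eqToIso, Bicategory.Strict.rightUnitor_eqToIso,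
    eqToIso.hom, eqToIso.inv, Bicategory.whiskerLeft_eqToHom, Bicategory.eqToHom_whiskerRight,
    eqToHom_trans, eqToHom_trans_assoc, eqToHom_refl, Category.assoc, Category.id_comp,
    Category.comp_id, LocSCG.zro]
    calc (k ◁ ((S.sharp c).hom ≫ S.inv2 θ)) ≫ π
        = (k ◁ (S.sharp c).hom) ≫ ((k ◁ S.inv2 θ) ≫ π) := by
          simp only [Bicategory.whiskerLeft_comp, Category.assoc]
      _ = (k ◁ (S.sharp c).hom) ≫ (S.sharp k).hom := by rw [key]
      _ = _ := hR.symm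
  obtain ⟨ηf, -, -⟩ := isH.2.2 H c π isH.1 (𝟙 H) (munit (S.monStr H H))
    (eqToHom (Category.comp_id c)) ((S.sharp c).hom ≫ S.inv2 θ) condE condF
  -- Step 11: conclude
  refine ⟨munit (S.monStr H S.zObj), munit (S.monStr S.zObj H), ⟨?_⟩, ⟨?_⟩⟩
  · letI := S.cellIso ηf
    exact eqToIso (S.zero_comp H S.zObj H) ≪≫ (asIso ηf).symm
  · exact eqToIso ((S.zero_comp S.zObj H S.zObj).trans (S.homZZ (𝟙 S.zObj)).symm)


/-- 2-exactness of the three-term diagram at a 0-cell of a complex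
implies relative 2-exactness of the complex there. -/
theorem stmt19 {B : Type u} [Bicategory.{w, v} B] [Bicategory.Strict B]
    (S : LocSCG B) (hS : IsRelExact S)
    (A : Cpx S) (m : ℤ)
    (h : S.TwoExact (A.d (m + 1)) (A.d (m + 1 + 1)) (A.δ (m + 1))) :
    S.RelTwoExactWindow (A.d m) (A.d (m + 1)) (A.d (m + 1 + 1)) (A.d (m + 1 + 1 + 1))
      (A.δ m) (A.δ (m + 1)) (A.δ (m + 1 + 1)) :=
  stmt19' S hS A m h
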